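/- Theorem 1 (FDR control of single-step QuTE, independent p-values): for every graph G and every level α ∈ (0,1), if the N p-values are mutually independent and every null p-value is superuniform, then the single-step QuTE procedure (c = 1) at level α satisfies FDR ≤ α·|H^0|/N. -/

import Mathlib

open MeasureTheory ProbabilityTheory Finset

open Classical in
/-- The Benjamini–Hochberg count `k̂_α(P)`: the largest `k ∈ {0,…,N}` such that
at least `k` of the p-values are `≤ α k / N`, where `N` is the number of hypotheses. -/
noncomputable def bhCount {I : Type*} [Fintype I] (α : ℝ) (P : I → ℝ) : ℕ :=
  Nat.findGreatest
    (fun k => k ≤ (Finset.univ.filter fun i => P i ≤ α * k / (Fintype.card I)).card)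
    (Fintype.card I)

open Classical in
/-- The Benjamini–Hochberg rejection set `Rej_α(P) = {i : P i ≤ α k̂_α(P) / N}`. -/
noncomputable def bhRej {I : Type*} [Fintype I] (α : ℝ) (P : I → ℝ) : Finset I :=
  Finset.univ.filter fun i => P i ≤ α * (bhCount α P) / (Fintype.card I)

open Classical in
/-- The p-value vector `P^{b,c}` known to node `b` after `c` rounds of communication:
every p-value hosted at a node of graph distance more than `c` from `b` is replaced by `1`. -/
noncomputable def quteMasked {V : Type*} (G : SimpleGraph V) (n : V → ℕ)
    (c : ℕ) (P : (Σ a : V, Fin (n a)) → ℝ) (b : V) : (Σ a : V, Fin (n a)) → ℝ :=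
  fun i => if G.edist b i.1 ≤ c then P i else 1

open Classical in
/-- The rejection set of the `c`-step QuTE procedure at level `α`: hypothesis `j` at node `a`
is rejected iff some node `b` within graph distance `c` of `a` rejects it in its local BH test
at level `α` on the p-values it knows (unknown p-values set to `1`). -/
noncomputable def quteRej {V : Type*} [Fintype V] (G : SimpleGraph V) (n : V → ℕ)
    (c : ℕ) (α : ℝ) (P : (Σ a : V, Fin (n a)) → ℝ) : Finset (Σ a : V, Fin (n a)) :=
  Finset.univ.filter fun i => ∃ b : V, G.edist i.1 b ≤ c ∧
    P i ≤ α * (bhCount α (quteMasked G n c P b)) / (Fintype.card (Σ a : V, Fin (n a)))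

section aux
variable {I : Type*} [Fintype I]
lemma bhCount_le (α : ℝ) (P : I → ℝ) : bhCount α P ≤ Fintype.card I :=
  Nat.findGreatest_le _
open Classical in
lemma le_bhCount {α : ℝ} {P : I → ℝ} {k : ℕ} (hk : k ≤ Fintype.card I)
    (h : k ≤ (Finset.univ.filter fun i => P i ≤ α * k / (Fintype.card I)).card) :
    k ≤ bhCount α P :=
  Nat.le_findGreatest hk h
open Classical in
lemma bhCount_spec {α : ℝ} {P : I → ℝ} (h : bhCount α P ≠ 0) :
    bhCount α P ≤ (Finset.univ.filter fun i =>
      P i ≤ α * (bhCount α P) / (Fintype.card I)).card :=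
  (Nat.findGreatest_eq_iff.1 (rfl : bhCount α P = _)).2.1 h
lemma bhCount_mono {α : ℝ} {P Q : I → ℝ} (h : ∀ j, P j ≤ Q j) :
    bhCount α Q ≤ bhCount α P := by
  classical
  set k := bhCount α Q with hk
  rcases Nat.eq_zero_or_pos k with h0 | h0
  · simp [h0]
  · refine le_bhCount ((hk ▸ bhCount_le α Q)) ?_
    refine le_trans (bhCount_spec (by omega)) ?_
    apply Finset.card_le_card
    intro j hj
    simp only [Finset.mem_filter, Finset.mem_univ, true_and] at hj ⊢
    exact le_trans (h j) hj
open Classical in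
lemma bhCount_le_of_agree {α : ℝ} {P Q : I → ℝ} {i : I}
    (hoff : ∀ j, j ≠ i → P j = Q j)
    (hPi : P i ≤ α * (bhCount α P) / (Fintype.card I))
    (hQi : Q i ≤ α * (bhCount α P) / (Fintype.card I)) :
    bhCount α P ≤ bhCount α Q := by
  classical
  set k := bhCount α P with hk
  rcases Nat.eq_zero_or_pos k with h0 | h0
  · simp [h0]
  · refine le_bhCount (hk ▸ bhCount_le α P) ?_
    refine le_trans (bhCount_spec (by omega)) (le_of_eq ?_)
    congr 1
    ext j
    simp only [Finset.mem_filter, Finset.mem_univ, true_and]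
    by_cases hj : j = i
    · subst hj; simp [← hk, hPi, hQi]
    · rw [hoff j hj]
end aux

section qute
variable {V : Type*} [Fintype V] [DecidableEq V] (G : SimpleGraph V) (n : V → ℕ) (α : ℝ)

open Classical in
noncomputable def quteKmax (P : (Σ a : V, Fin (n a)) → ℝ) : ℕ :=
  max (Finset.univ.sup fun b => bhCount α (quteMasked G n 1 P b)) 1

variable {G n α}
local notation "N" => Fintype.card (Σ a : V, Fin (n a))

lemma one_le_quteKmax (P : (Σ a : V, Fin (n a)) → ℝ) : 1 ≤ quteKmax G n α P :=
  le_max_right _ _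

lemma quteKmax_le (hN : 0 < N) (P : (Σ a : V, Fin (n a)) → ℝ) :
    quteKmax G n α P ≤ N :=
  max_le (Finset.sup_le fun _ _ => bhCount_le α _) hN

lemma bhCount_le_quteKmax (P : (Σ a : V, Fin (n a)) → ℝ) (b : V) :
    bhCount α (quteMasked G n 1 P b) ≤ quteKmax G n α P :=
  le_trans (Finset.le_sup (f := fun b => bhCount α (quteMasked G n 1 P b))
    (Finset.mem_univ b)) (le_max_left _ _)

lemma quteKmax_mono {P Q : (Σ a : V, Fin (n a)) → ℝ} (h : ∀ j, P j ≤ Q j) :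
    quteKmax G n α Q ≤ quteKmax G n α P := by
  apply max_le _ (le_max_right _ _)
  refine Finset.sup_le fun b _ => le_trans (bhCount_mono fun j => ?_)
    (bhCount_le_quteKmax P b)
  unfold quteMasked
  split <;> simp [h]

/-- Core leave-one-out transfer: if `P i` is below the threshold given by the bhCount of
the masked zeroed-out vector, then the masked original vector has at least that bhCount. -/
lemma bhCount_core (hα : 0 < α) {P : (Σ a : V, Fin (n a)) → ℝ} {i : Σ a : V, Fin (n a)} {b : V}
    (hk : P i ≤ α * (bhCount α (quteMasked G n 1 (Function.update P i 0) b)) / N) :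
    bhCount α (quteMasked G n 1 (Function.update P i 0) b)
      ≤ bhCount α (quteMasked G n 1 P b) := by
  classical
  have hone : ∀ Q : (Σ a : V, Fin (n a)) → ℝ, ∀ j, quteMasked G n 1 Q b j
      = if G.edist b j.1 ≤ (1 : ℕ∞) then Q j else 1 := by
    intro Q j
    simp [quteMasked]
  by_cases hd : G.edist b i.1 ≤ (1 : ℕ∞)
  · refine bhCount_le_of_agree (i := i) (fun j hj => ?_) ?_ ?_
    · rw [hone, hone, Function.update_of_ne hj]
    · show quteMasked G n 1 (Function.update P i 0) b i ≤ _
      rw [hone, if_pos hd, Function.update_self]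
      positivity
    · show quteMasked G n 1 P b i ≤ _
      rw [hone, if_pos hd]
      exact hk
  · have heq : quteMasked G n 1 (Function.update P i 0) b = quteMasked G n 1 P b := by
      funext j
      rw [hone, hone]
      by_cases hj : j = i
      · subst hj; rw [if_neg hd, if_neg hd]
      · rw [Function.update_of_ne hj]
    exact le_of_eq (congrArg (bhCount α) heq)
end qute

section qute2
variable {V : Type*} [Fintype V] [DecidableEq V] {G : SimpleGraph V} {n : V → ℕ} {α : ℝ}
local notation "N" => Fintype.card (Σ a : V, Fin (n a))

/-- On the event, the leave-one-out kmax is no larger. -/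
lemma quteKmax_update_le (hα : 0 < α) {P : (Σ a : V, Fin (n a)) → ℝ}
    {i : Σ a : V, Fin (n a)}
    (h : P i ≤ α * (quteKmax G n α P) / N) :
    quteKmax G n α (Function.update P i 0) ≤ quteKmax G n α P := by
  refine max_le (Finset.sup_le fun b _ => ?_) (one_le_quteKmax P)
  by_contra hlt
  push_neg at hlt
  have hk : P i ≤ α * (bhCount α (quteMasked G n 1 (Function.update P i 0) b)) / N := by
    refine h.trans ?_
    gcongr <;> exact_mod_cast hlt.le
  exact absurd (le_trans (bhCount_core hα hk) (bhCount_le_quteKmax P b)) (by omega)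

/-- Reverse event inclusion. -/
lemma event_rev [Nonempty V] (hα : 0 < α) {P : (Σ a : V, Fin (n a)) → ℝ}
    {i : Σ a : V, Fin (n a)}
    (h : P i ≤ α * (quteKmax G n α (Function.update P i 0)) / N) :
    P i ≤ α * (quteKmax G n α P) / N := by
  classical
  obtain ⟨b, -, hb⟩ := Finset.exists_mem_eq_sup (Finset.univ : Finset V)
    Finset.univ_nonempty
    (fun b => bhCount α (quteMasked G n 1 (Function.update P i 0) b))
  rcases Nat.eq_zero_or_pos (bhCount α (quteMasked G n 1 (Function.update P i 0) b)) with h0 | h0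
  · have : quteKmax G n α (Function.update P i 0) = 1 := by
      unfold quteKmax
      omega
    rw [this] at h
    refine h.trans ?_
    gcongr
    exact_mod_cast one_le_quteKmax P
  · have hm : quteKmax G n α (Function.update P i 0)
        = bhCount α (quteMasked G n 1 (Function.update P i 0) b) := by
      unfold quteKmax
      omega
    rw [hm] at h
    refine h.trans ?_
    gcongr
    exact_mod_cast le_trans (bhCount_core hα h) (bhCount_le_quteKmax P b)

/-- Every local BH count is at most the total number of QuTE rejections. -/
lemma quteKmax_le_rej (hα : 0 < α) (hα1 : α < 1) (hN : 0 < N)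
    (P : (Σ a : V, Fin (n a)) → ℝ) :
    quteKmax G n α P ≤ max (quteRej G n 1 α P).card 1 := by
  classical
  refine max_le (Finset.sup_le fun b _ => ?_) (le_max_right _ _)
  set k := bhCount α (quteMasked G n 1 P b) with hkdef
  rcases Nat.eq_zero_or_pos k with h0 | h0
  · omega
  have hthr : α * k / N < 1 := by
    have hkN : (k : ℝ) ≤ N := by exact_mod_cast hkdef ▸ bhCount_le α _
    have hNR : (0:ℝ) < N := by exact_mod_cast hN
    rw [div_lt_one hNR]
    nlinarith [mul_le_mul_of_nonneg_left hkN hα.le, mul_lt_mul_of_pos_right hα1 hNR]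
  have hsub : (Finset.univ.filter fun j => quteMasked G n 1 P b j ≤ α * k / N)
      ⊆ quteRej G n 1 α P := by
    intro j hj
    simp only [Finset.mem_filter, Finset.mem_univ, true_and] at hj
    have hd : G.edist b j.1 ≤ (1 : ℕ∞) := by
      by_contra hd
      have : quteMasked G n 1 P b j = 1 := by
        simp [quteMasked, hd]
      rw [this] at hj
      linarith
    have hPj : P j ≤ α * k / N := by
      have : quteMasked G n 1 P b j = P j := by simp [quteMasked, hd]
      rwa [this] at hj
    unfold quteRej
    simp only [Finset.mem_filter, Finset.mem_univ, true_and]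
    exact ⟨b, by rwa [SimpleGraph.edist_comm] at hd, by simpa using hPj⟩
  calc k ≤ (Finset.univ.filter fun j => quteMasked G n 1 P b j ≤ α * k / N).card :=
        bhCount_spec (by omega)
    _ ≤ (quteRej G n 1 α P).card := Finset.card_le_card hsub
    _ ≤ max (quteRej G n 1 α P).card 1 := le_max_left _ _

/-- Rejection implies the event. -/
lemma mem_quteRej_event (hα : 0 < α) {P : (Σ a : V, Fin (n a)) → ℝ}
    {i : Σ a : V, Fin (n a)} (h : i ∈ quteRej G n 1 α P) :
    P i ≤ α * (quteKmax G n α P) / N := by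
  classical
  unfold quteRej at h
  simp only [Finset.mem_filter, Finset.mem_univ, true_and] at h
  obtain ⟨b, -, hb⟩ := h
  refine hb.trans ?_
  gcongr
  exact_mod_cast bhCount_le_quteKmax P b
end qute2

section meas
variable {β : Type*} [MeasurableSpace β]

lemma measurable_nat_sup {ι : Type*} (s : Finset ι) (f : ι → β → ℕ)
    (hf : ∀ b, Measurable (f b)) : Measurable fun x => s.sup (fun b => f b x) := by
  induction s using Finset.cons_induction with
  | empty => simp only [Finset.sup_empty]; exact measurable_const
  | cons a s ha ih => simp only [Finset.sup_cons]; exact (hf a).max ih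

open Classical in
lemma measurable_filter_card {I : Type*} [Fintype I] (F : β → I → ℝ)
    (hF : ∀ j, Measurable fun x => F x j) (c : ℝ) :
    Measurable fun x => ((Finset.univ.filter fun j => F x j ≤ c).card : ℕ) := by
  have h : ∀ x, ((Finset.univ.filter fun j => F x j ≤ c).card)
      = ∑ j : I, if F x j ≤ c then 1 else 0 := by
    intro x; rw [Finset.card_filter]
  simp only [h]
  exact Finset.measurable_sum _ fun j _ =>
    Measurable.ite (measurableSet_le (hF j) measurable_const) measurable_const measurable_const

open Classical in
lemma measurable_bhCount {I : Type*} [Fintype I] (α : ℝ) (F : β → I → ℝ)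
    (hF : ∀ j, Measurable fun x => F x j) :
    Measurable fun x => bhCount α (F x) := by
  have hpred : ∀ k : ℕ, MeasurableSet {x : β |
      k ≤ ((Finset.univ.filter fun j => F x j ≤ α * k / (Fintype.card I)).card)} := by
    intro k
    have := measurable_filter_card F hF (α * k / (Fintype.card I))
    exact this (Set.to_countable {m : ℕ | k ≤ m}).measurableSet
  apply measurable_to_countable'
  intro y
  have hEq : (fun x => bhCount α (F x)) ⁻¹' {y} =
      ({x : β | y ≤ Fintype.card I} ∩
       {x : β | y ≠ 0 → y ≤ ((Finset.univ.filter fun j =>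
          F x j ≤ α * y / (Fintype.card I)).card)} ∩
       ⋂ m : ℕ, {x : β | y < m → m ≤ Fintype.card I →
          ¬ m ≤ ((Finset.univ.filter fun j =>
            F x j ≤ α * m / (Fintype.card I)).card)}) := by
    ext x
    simp only [Set.mem_preimage, Set.mem_singleton_iff, bhCount, Nat.findGreatest_eq_iff,
      Set.mem_inter_iff, Set.mem_setOf_eq, Set.mem_iInter]
    tauto
  rw [hEq]
  refine MeasurableSet.inter (MeasurableSet.inter ?_ ?_) (MeasurableSet.iInter fun m => ?_)
  · by_cases h : y ≤ Fintype.card I <;> simp [h]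
  · by_cases h : y = 0
    · simp [h]
    · simpa [h] using hpred y
  · by_cases h1 : y < m
    · by_cases h2 : m ≤ Fintype.card I
      · have hset : {x : β | y < m → m ≤ Fintype.card I →
            ¬ m ≤ ((Finset.univ.filter fun j =>
              F x j ≤ α * m / (Fintype.card I)).card)}
            = {x : β | m ≤ ((Finset.univ.filter fun j =>
              F x j ≤ α * m / (Fintype.card I)).card)}ᶜ := by
          ext x; simp [h1, h2]
        rw [hset]
        exact (hpred m).compl
      · simp [h1, h2]
    · simp [h1]

lemma measurable_quteKmax {V : Type*} [Fintype V] (G : SimpleGraph V) (n : V → ℕ)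
    (α : ℝ) (F : β → (Σ a : V, Fin (n a)) → ℝ)
    (hF : ∀ j, Measurable fun x => F x j) :
    Measurable fun x => quteKmax G n α (F x) := by
  unfold quteKmax
  refine Measurable.max ?_ measurable_const
  refine measurable_nat_sup _ _ fun b => ?_
  refine measurable_bhCount α _ fun j => ?_
  simp only [quteMasked]
  by_cases hd : G.edist b j.1 ≤ ((1:ℕ) : ℕ∞) <;> simp only [hd, if_true, if_false]
  · exact hF j
  · exact measurable_const
end meas

/-- **Theorem 1 (FDR control of single-step QuTE, independent p-values).**
For every graph `G` and level `α ∈ (0,1)`, if the `N` p-values are mutually independent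
and every null p-value is superuniform, then single-step QuTE (`c = 1`) at level `α`
satisfies `FDR ≤ α |H⁰| / N`. -/
theorem qute_single_step_fdr_control_indep
    {V : Type*} [Fintype V] [DecidableEq V] [Nonempty V] (G : SimpleGraph V)
    (n : V → ℕ) (hn : ∀ a, 1 ≤ n a)
    {Ω : Type*} [MeasurableSpace Ω] (μ : Measure Ω) [IsProbabilityMeasure μ]
    (P : Ω → (Σ a : V, Fin (n a)) → ℝ)
    (hPmeas : ∀ i, Measurable fun ω => P ω i)
    (hPrange : ∀ ω i, P ω i ∈ Set.Icc (0 : ℝ) 1)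
    (hindep : iIndepFun
      (fun i ω => P ω i) μ)
    (H0 : Finset (Σ a : V, Fin (n a)))
    (hnull : ∀ i ∈ H0, ∀ u ∈ Set.Icc (0 : ℝ) 1,
      μ {ω | P ω i ≤ u} ≤ ENNReal.ofReal u)
    (α : ℝ) (hα : α ∈ Set.Ioo (0 : ℝ) 1) :
    ∫ ω, (((quteRej G n 1 α (P ω) ∩ H0).card : ℝ) /
        (max ((quteRej G n 1 α (P ω)).card) 1 : ℕ)) ∂μ
      ≤ α * H0.card / Fintype.card (Σ a : V, Fin (n a)) := by
  classical
  obtain ⟨hα0, hα1⟩ := hα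
  have hne : Nonempty (Σ a : V, Fin (n a)) := ⟨⟨Classical.arbitrary V, ⟨0, hn _⟩⟩⟩
  set N : ℕ := Fintype.card (Σ a : V, Fin (n a)) with hNdef
  have hN : 0 < N := Fintype.card_pos
  have hNR : (0:ℝ) < N := by exact_mod_cast hN
  -- the leave-one-out kmax
  set m : (Σ a : V, Fin (n a)) → Ω → ℕ :=
    fun i ω => quteKmax G n α (Function.update (P ω) i 0) with hmdef
  have hmmeas : ∀ i, Measurable (m i) := by
    intro i
    apply measurable_quteKmax
    intro j
    by_cases hj : j = i
    · subst hj
      simp only [Function.update_self]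
      exact measurable_const
    · simp only [Function.update_of_ne hj]
      exact hPmeas j
  -- the events
  set X : (Σ a : V, Fin (n a)) → ℕ → Set Ω := fun i k => m i ⁻¹' {k} with hXdef
  set Y : (Σ a : V, Fin (n a)) → ℕ → Set Ω :=
    fun i k => (fun ω => P ω i) ⁻¹' Set.Iic (α * k / N) with hYdef
  have hXmeas : ∀ i k, MeasurableSet (X i k) :=
    fun i k => (hmmeas i) (measurableSet_singleton k)
  have hYmeas : ∀ i k, MeasurableSet (Y i k) :=
    fun i k => (hPmeas i) measurableSet_Iic
  -- the dominating function
  set F : Ω → ℝ := fun ω => ∑ i ∈ H0, ∑ k ∈ Finset.Icc 1 N,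
    Set.indicator (X i k ∩ Y i k) (fun _ => (k:ℝ)⁻¹) ω with hFdef
  -- pointwise bound
  have hpt : ∀ ω, (((quteRej G n 1 α (P ω) ∩ H0).card : ℝ) /
      (max ((quteRej G n 1 α (P ω)).card) 1 : ℕ)) ≤ F ω := by
    intro ω
    have hinter : quteRej G n 1 α (P ω) ∩ H0 = H0.filter (fun i => i ∈ quteRej G n 1 α (P ω)) := by
      ext j; simp [Finset.mem_inter, and_comm]
    have hsplit : ((quteRej G n 1 α (P ω) ∩ H0).card : ℝ)
        = ∑ i ∈ H0, (if i ∈ quteRej G n 1 α (P ω) then (1:ℝ) else 0) := by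
      rw [hinter, Finset.card_filter]
      push_cast
      rfl
    rw [hsplit, Finset.sum_div]
    refine Finset.sum_le_sum fun i hi => ?_
    by_cases hiR : i ∈ quteRej G n 1 α (P ω)
    · -- i is rejected
      have hE : P ω i ≤ α * (quteKmax G n α (P ω)) / N := mem_quteRej_event hα0 hiR
      have hA : quteKmax G n α (P ω) ≤ m i ω := by
        apply quteKmax_mono
        intro j
        by_cases hj : j = i
        · subst hj; rw [Function.update_self]; exact (hPrange ω j).1
        · rw [Function.update_of_ne hj]
      have hB : m i ω ≤ quteKmax G n α (P ω) := quteKmax_update_le hα0 hE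
      have hk0 : m i ω = quteKmax G n α (P ω) := le_antisymm hB hA
      have hk01 : 1 ≤ m i ω := hk0 ▸ one_le_quteKmax (P ω)
      have hk0N : m i ω ≤ N := hk0 ▸ quteKmax_le hN (P ω)
      have hDk : (m i ω : ℝ) ≤ (max (quteRej G n 1 α (P ω)).card 1 : ℕ) := by
        exact_mod_cast hk0 ▸ quteKmax_le_rej hα0 hα1 hN (P ω)
      have hterm : (if i ∈ quteRej G n 1 α (P ω) then (1:ℝ) else 0) /
          ((max (quteRej G n 1 α (P ω)).card 1 : ℕ) : ℝ) ≤ ((m i ω : ℝ))⁻¹ := by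
        rw [if_pos hiR]
        rw [one_div]
        apply inv_anti₀
        · exact_mod_cast hk01
        · exact hDk
      refine hterm.trans ?_
      have hmem : ω ∈ X i (m i ω) ∩ Y i (m i ω) := by
        constructor
        · exact rfl
        · show P ω i ≤ α * (m i ω) / N
          rw [hk0]
          exact hE
      calc ((m i ω : ℝ))⁻¹
          = Set.indicator (X i (m i ω) ∩ Y i (m i ω)) (fun _ => ((m i ω : ℝ))⁻¹) ω := by
            rw [Set.indicator_of_mem hmem]
        _ ≤ ∑ k ∈ Finset.Icc 1 N,
            Set.indicator (X i k ∩ Y i k) (fun _ => (k:ℝ)⁻¹) ω := by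
            refine Finset.single_le_sum (f := fun k =>
              Set.indicator (X i k ∩ Y i k) (fun _ => (k:ℝ)⁻¹) ω) ?_ ?_
            · intro k hk
              apply Set.indicator_nonneg
              intro _ _
              positivity
            · exact Finset.mem_Icc.2 ⟨hk01, hk0N⟩
    · rw [if_neg hiR]
      rw [zero_div]
      refine Finset.sum_nonneg fun k hk => ?_
      apply Set.indicator_nonneg
      intro _ _
      positivity
  -- integrability of F
  have hFint : Integrable F μ := by
    apply integrable_finset_sum
    intro i hi
    apply integrable_finset_sum
    intro k hk
    exact (integrable_const _).indicator ((hXmeas i k).inter (hYmeas i k))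
  refine le_trans (integral_mono_of_nonneg (Filter.Eventually.of_forall fun ω => by positivity)
    hFint (Filter.Eventually.of_forall hpt)) ?_
  -- independence factorization
  have hindepmi : ∀ i, IndepFun (m i) (fun ω => P ω i) μ := by
    intro i
    set S : Finset (Σ a : V, Fin (n a)) := Finset.univ.erase i with hSdef
    set T : Finset (Σ a : V, Fin (n a)) := {i} with hTdef
    have hdisj : Disjoint S T := by
      simp [hSdef, hTdef, Finset.disjoint_left]
    have hIF := hindep.indepFun_finset S T hdisj (fun j => hPmeas j)
    set Φ : ((j : {x // x ∈ S}) → ℝ) → ℕ := fun Q =>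
      quteKmax G n α (fun j => if h : j ∈ S then Q ⟨j, h⟩ else 0) with hPhidef
    have hΦ : Measurable Φ := by
      apply measurable_quteKmax
      intro j
      by_cases h : j ∈ S
      · simp only [h, dif_pos]
        exact measurable_pi_apply _
      · simp only [h, dif_neg, not_false_iff]
        exact measurable_const
    set ψ : ((j : {x // x ∈ T}) → ℝ) → ℝ := fun Q => Q ⟨i, Finset.mem_singleton_self i⟩
      with hpsidef
    have hψ : Measurable ψ := measurable_pi_apply _
    have hcomp := hIF.comp hΦ hψ
    have heq1 : (Φ ∘ fun ω (j : {x // x ∈ S}) => P ω j) = m i := by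
      funext ω
      show quteKmax G n α _ = quteKmax G n α _
      congr 1
      funext j
      by_cases hj : j = i
      · subst hj
        simp [hSdef]
      · simp [hSdef, hj, Function.update_of_ne hj]
    have heq2 : (ψ ∘ fun ω (j : {x // x ∈ T}) => P ω j) = fun ω => P ω i := rfl
    rwa [heq1, heq2] at hcomp
  have hfac : ∀ i k, μ (X i k ∩ Y i k) = μ (X i k) * μ (Y i k) := by
    intro i k
    exact (hindepmi i).measure_inter_preimage_eq_mul {k} (Set.Iic (α * k / N))
      (measurableSet_singleton k) measurableSet_Iic
  -- compute the integral of F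
  rw [hFdef, integral_finset_sum _ (fun i _ => integrable_finset_sum _
    (fun k _ => (integrable_const _).indicator ((hXmeas i k).inter (hYmeas i k))))]
  have hbound : ∀ i ∈ H0, (∫ ω, ∑ k ∈ Finset.Icc 1 N,
      Set.indicator (X i k ∩ Y i k) (fun _ => (k:ℝ)⁻¹) ω ∂μ) ≤ α / N := by
    intro i hi
    rw [integral_finset_sum _ (fun k _ =>
      (integrable_const _).indicator ((hXmeas i k).inter (hYmeas i k)))]
    have hterm : ∀ k ∈ Finset.Icc 1 N,
        (∫ ω, Set.indicator (X i k ∩ Y i k) (fun _ => (k:ℝ)⁻¹) ω ∂μ)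
          ≤ (μ (X i k)).toReal * (α / N) := by
      intro k hk
      obtain ⟨hk1, hkN⟩ := Finset.mem_Icc.1 hk
      have hu0 : (0:ℝ) ≤ α * k / N := by positivity
      have hu1 : α * k / N ≤ 1 := by
        rw [div_le_one hNR]
        have : (k:ℝ) ≤ N := by exact_mod_cast hkN
        nlinarith
      have hY : μ (Y i k) ≤ ENNReal.ofReal (α * k / N) :=
        hnull i hi (α * k / N) ⟨hu0, hu1⟩
      rw [integral_indicator_const _ ((hXmeas i k).inter (hYmeas i k))]
      rw [smul_eq_mul, measureReal_def, hfac i k, ENNReal.toReal_mul]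
      have hYR : (μ (Y i k)).toReal ≤ α * k / N := by
        refine le_trans (ENNReal.toReal_mono ENNReal.ofReal_ne_top hY) ?_
        rw [ENNReal.toReal_ofReal hu0]
      have hkpos : (0:ℝ) < k := by exact_mod_cast hk1
      calc (μ (X i k)).toReal * (μ (Y i k)).toReal * (k:ℝ)⁻¹
          ≤ (μ (X i k)).toReal * (α * k / N) * (k:ℝ)⁻¹ := by
            apply mul_le_mul_of_nonneg_right _ (by positivity)
            exact mul_le_mul_of_nonneg_left hYR ENNReal.toReal_nonneg
        _ = (μ (X i k)).toReal * (α / N) := by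
            field_simp
    refine le_trans (Finset.sum_le_sum hterm) ?_
    rw [← Finset.sum_mul]
    have hXsum : ∑ k ∈ Finset.Icc 1 N, (μ (X i k)).toReal ≤ 1 := by
      rw [← ENNReal.toReal_sum (fun k _ => measure_ne_top μ _)]
      have hdisjX : (↑(Finset.Icc 1 N) : Set ℕ).PairwiseDisjoint (X i) := by
        intro k _ k' _ hkk'
        apply Set.disjoint_left.2
        intro ω h1 h2
        exact hkk' (h1.symm.trans h2)
      have : ∑ k ∈ Finset.Icc 1 N, μ (X i k) = μ (⋃ k ∈ Finset.Icc 1 N, X i k) :=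
        (measure_biUnion_finset hdisjX (fun k _ => hXmeas i k)).symm
      rw [this]
      have := prob_le_one (μ := μ) (s := ⋃ k ∈ Finset.Icc 1 N, X i k)
      calc (μ (⋃ k ∈ Finset.Icc 1 N, X i k)).toReal
          ≤ (1:ENNReal).toReal := ENNReal.toReal_mono ENNReal.one_ne_top this
        _ = 1 := by simp
    calc (∑ k ∈ Finset.Icc 1 N, (μ (X i k)).toReal) * (α / N) ≤ 1 * (α / N) := by
          apply mul_le_mul_of_nonneg_right hXsum (by positivity)
      _ = α / N := one_mul _
  refine le_trans (Finset.sum_le_sum hbound) ?_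
  rw [Finset.sum_const, nsmul_eq_mul]
  exact le_of_eq (by ring)
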